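/- A 2×2 integer matrix M has all entries nonnegative and determinant equal to 1 or −1 if and only if M belongs to the multiplicative submonoid of 2×2 integer matrices generated by L = [[1,0],[1,1]], N = [[1,1],[0,1]] and F = [[0,1],[1,0]]. -/
import Mathlib

namespace LNFaux

def S : Set (Matrix (Fin 2) (Fin 2) ℤ) := {!![1, 0; 1, 1], !![1, 1; 0, 1], !![0, 1; 1, 0]}

lemma L_mem : !![(1:ℤ),0;1,1] ∈ Submonoid.closure S :=
  Submonoid.subset_closure (by simp [S])
lemma N_mem : !![(1:ℤ),1;0,1] ∈ Submonoid.closure S :=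
  Submonoid.subset_closure (by simp [S])
lemma F_mem : !![(0:ℤ),1;1,0] ∈ Submonoid.closure S :=
  Submonoid.subset_closure (by simp [S])

lemma Npow (n : ℕ) : !![(1:ℤ), n; 0, 1] ∈ Submonoid.closure S := by
  induction n with
  | zero =>
    have : !![(1:ℤ), (0:ℕ); 0, 1] = 1 := by
      rw [Matrix.one_fin_two]; norm_num
    rw [this]; exact one_mem _
  | succ n ih =>
    have : !![(1:ℤ), ((n+1 : ℕ):ℤ); 0, 1] = !![1,1;0,1] * !![(1:ℤ), n; 0, 1] := by
      rw [Matrix.mul_fin_two]; norm_num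
    rw [this]; exact mul_mem N_mem ih

lemma Lpow (n : ℕ) : !![(1:ℤ), 0; n, 1] ∈ Submonoid.closure S := by
  induction n with
  | zero =>
    have : !![(1:ℤ), 0; ((0:ℕ):ℤ), 1] = 1 := by
      rw [Matrix.one_fin_two]; norm_num
    rw [this]; exact one_mem _
  | succ n ih =>
    have : !![(1:ℤ), 0; ((n+1 : ℕ):ℤ), 1] = !![1,0;1,1] * !![(1:ℤ), 0; n, 1] := by
      rw [Matrix.mul_fin_two]; norm_num [add_comm]
    rw [this]; exact mul_mem L_mem ih

lemma NpowZ (b : ℤ) (hb : 0 ≤ b) : !![(1:ℤ), b; 0, 1] ∈ Submonoid.closure S := by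
  have := Npow b.toNat
  rwa [Int.toNat_of_nonneg hb] at this

lemma LpowZ (c : ℤ) (hc : 0 ≤ c) : !![(1:ℤ), 0; c, 1] ∈ Submonoid.closure S := by
  have := Lpow c.toNat
  rwa [Int.toNat_of_nonneg hc] at this

lemma mul_eq_one_of_nonneg {a d : ℤ} (ha : 0 ≤ a) (hd : 0 ≤ d)
    (h : a * d = 1 ∨ a * d = -1) : a = 1 ∧ d = 1 := by
  rcases h with h | h
  · rcases Int.mul_eq_one_iff_eq_one_or_neg_one.mp h with ⟨h1, h2⟩ | ⟨h1, h2⟩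
    · exact ⟨h1, h2⟩
    · omega
  · exfalso
    rcases Int.mul_eq_neg_one_iff_eq_one_or_neg_one.mp h with ⟨h1, h2⟩ | ⟨h1, h2⟩ <;> omega

lemma forward : ∀ s : ℕ, ∀ a b c d : ℤ, 0 ≤ a → 0 ≤ b → 0 ≤ c → 0 ≤ d →
    (a*d - b*c = 1 ∨ a*d - b*c = -1) → a + b + c + d ≤ s →
    !![a,b;c,d] ∈ Submonoid.closure S := by
  intro s
  induction s with
  | zero =>
    intro a b c d ha hb hc hd hdet hs
    exfalso
    have : a = 0 ∧ b = 0 ∧ c = 0 ∧ d = 0 := by omega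
    obtain ⟨rfl, rfl, rfl, rfl⟩ := this
    omega
  | succ s ih =>
    intro a b c d ha hb hc hd hdet hs
    by_cases hc0 : c = 0
    · subst hc0
      obtain ⟨rfl, rfl⟩ := mul_eq_one_of_nonneg ha hd (by simpa using hdet)
      exact NpowZ b hb
    by_cases hb0 : b = 0
    · subst hb0
      obtain ⟨rfl, rfl⟩ := mul_eq_one_of_nonneg ha hd (by simpa using hdet)
      exact LpowZ c hc
    by_cases ha0 : a = 0
    · subst ha0
      have hbc : b * c = 1 ∨ b * c = -1 := by simp at hdet; omega
      obtain ⟨rfl, rfl⟩ := mul_eq_one_of_nonneg hb hc hbc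
      have : !![(0:ℤ),1;1,d] = !![0,1;1,0] * !![1,d;0,1] := by
        rw [Matrix.mul_fin_two]; norm_num
      rw [this]
      exact mul_mem F_mem (NpowZ d hd)
    by_cases hd0 : d = 0
    · subst hd0
      have hbc : b * c = 1 ∨ b * c = -1 := by simp at hdet; omega
      obtain ⟨rfl, rfl⟩ := mul_eq_one_of_nonneg hb hc hbc
      have : !![a,(1:ℤ);1,0] = !![1,a;0,1] * !![0,1;1,0] := by
        rw [Matrix.mul_fin_two]; norm_num
      rw [this]
      exact mul_mem (NpowZ a ha) F_mem
    -- all entries positive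
    have ha1 : 1 ≤ a := by omega
    have hb1 : 1 ≤ b := by omega
    have hc1 : 1 ≤ c := by omega
    have hd1 : 1 ≤ d := by omega
    rcases le_or_gt c a with hca | hca
    · rcases le_or_gt d b with hdb | hdb
      · -- N reduce
        have heq : !![a,b;c,d] = !![1,1;0,1] * !![a-c,b-d;c,d] := by
          rw [Matrix.mul_fin_two]; norm_num
        rw [heq]
        refine mul_mem N_mem (ih (a-c) (b-d) c d (by omega) (by omega) hc hd ?_ (by omega))
        have : (a-c)*d - (b-d)*c = a*d - b*c := by ring
        omega
      · -- a ≥ c, b < d : contradiction unless a = c handled? show contradiction a > c, else L reduce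
        rcases lt_or_eq_of_le hca with hlt | heq
        · exfalso
          have h1 : (c+1) * (b+1) ≤ a * d := by
            apply mul_le_mul (by omega) (by omega) (by omega) (by omega)
          rcases hdet with h | h <;> nlinarith
        · -- c = a, d > b : L reduce
          have heq2 : !![a,b;c,d] = !![1,0;1,1] * !![a,b;c-a,d-b] := by
            rw [Matrix.mul_fin_two]; norm_num
          rw [heq2]
          refine mul_mem L_mem (ih a b (c-a) (d-b) ha hb (by omega) (by omega) ?_ (by omega))
          have : a*(d-b) - b*(c-a) = a*d - b*c := by ring
          omega
    · rcases le_or_gt b d with hbd | hbd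
      · -- L reduce
        have heq2 : !![a,b;c,d] = !![1,0;1,1] * !![a,b;c-a,d-b] := by
          rw [Matrix.mul_fin_two]; norm_num
        rw [heq2]
        refine mul_mem L_mem (ih a b (c-a) (d-b) ha hb (by omega) (by omega) ?_ (by omega))
        have : a*(d-b) - b*(c-a) = a*d - b*c := by ring
        omega
      · exfalso
        have h1 : (a+1) * (d+1) ≤ c * b := by
          apply mul_le_mul (by omega) (by omega) (by omega) (by omega)
        rcases hdet with h | h <;> nlinarith

end LNFaux

/-- A 2×2 integer matrix has all entries nonnegative and determinant `±1` iff it lies in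
the multiplicative submonoid generated by `L = [[1,0],[1,1]]`, `N = [[1,1],[0,1]]` and
`F = [[0,1],[1,0]]`. -/
theorem nonneg_det_pm_one_iff_mem_closure_LNF (M : Matrix (Fin 2) (Fin 2) ℤ) :
    ((∀ i j, 0 ≤ M i j) ∧ (M.det = 1 ∨ M.det = -1)) ↔
      M ∈ Submonoid.closure
        ({!![1, 0; 1, 1], !![1, 1; 0, 1], !![0, 1; 1, 0]} :
          Set (Matrix (Fin 2) (Fin 2) ℤ)) := by
  constructor
  · rintro ⟨hpos, hdet⟩
    have hM : M = !![M 0 0, M 0 1; M 1 0, M 1 1] := by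
      ext i j; fin_cases i <;> fin_cases j <;> simp
    rw [Matrix.det_fin_two] at hdet
    rw [hM]
    exact LNFaux.forward (M 0 0 + M 0 1 + M 1 0 + M 1 1).toNat _ _ _ _
      (hpos 0 0) (hpos 0 1) (hpos 1 0) (hpos 1 1) hdet (by
        rw [Int.toNat_of_nonneg] <;>
        · have := hpos 0 0; have := hpos 0 1; have := hpos 1 0; have := hpos 1 1; omega)
  · intro hM
    induction hM using Submonoid.closure_induction with
    | mem x hx =>
      rcases hx with rfl | rfl | rfl <;>
        refine ⟨fun i j => ?_, ?_⟩ <;>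
        first
          | (fin_cases i <;> fin_cases j <;> norm_num)
          | (simp [Matrix.det_fin_two])
    | one =>
      refine ⟨fun i j => ?_, Or.inl Matrix.det_one⟩
      by_cases h : i = j <;> simp [Matrix.one_apply, h]
    | mul x y hx hy ihx ihy =>
      obtain ⟨hxp, hxd⟩ := ihx
      obtain ⟨hyp, hyd⟩ := ihy
      refine ⟨fun i j => ?_, ?_⟩
      · rw [Matrix.mul_apply]
        exact Finset.sum_nonneg fun k _ => mul_nonneg (hxp i k) (hyp k j)
      · rw [Matrix.det_mul]
        rcases hxd with h1 | h1 <;> rcases hyd with h2 | h2 <;> rw [h1, h2] <;> norm_num
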